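/- There exists an absolute constant C > 0 such that for every α > 0, all integers 0 < m < N, every choice of multipliers q̂_0, …, q̂_N satisfying q̂_k = 0 for k ≤ m and 1 − m/k ≤ q̂_k < 1 for k > m, and every φ ∈ R_N, one has ‖D_x Q_m φ‖² ≤ C (‖D_x φ‖² + α² m² ‖φ‖²). -/

import Mathlib

open MeasureTheory Real

/-- Physicists' Hermite polynomial: `ℋ_n(x) = (−1)^n e^{x²} (dⁿ/dxⁿ) e^{−x²}`. -/
noncomputable def physHermite (n : ℕ) : ℝ → ℝ :=
  fun x => (-1 : ℝ) ^ n * Real.exp (x ^ 2) * iteratedDeriv n (fun y => Real.exp (-(y ^ 2))) x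

/-- Generalized Hermite function `H_n^α(x) = (α/(2^n n! √π))^{1/2} ℋ_n(αx) e^{−α²x²/2}`. -/
noncomputable def genHermite (α : ℝ) (n : ℕ) : ℝ → ℝ :=
  fun x => Real.sqrt (α / (2 ^ n * n.factorial * Real.sqrt Real.pi)) *
    physHermite n (α * x) * Real.exp (-(α ^ 2 * x ^ 2) / 2)

/-- Integer-indexed generalized Hermite function, with the convention `H_n^α ≡ 0` for `n < 0`. -/
noncomputable def genHermiteZ (α : ℝ) (n : ℤ) : ℝ → ℝ :=
  fun x => if 0 ≤ n then genHermite α n.toNat x else 0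

/-- The operator `D_x = ∂_x + α² x`. -/
noncomputable def Dx (α : ℝ) (u : ℝ → ℝ) : ℝ → ℝ :=
  fun x => deriv u x + α ^ 2 * x * u x

/-- The Sturm–Liouville operator
`L_α(u)(x) = −e^{α²x²/2} ∂_x(e^{−α²x²} ∂_x(e^{α²x²/2} u(x)))`. -/
noncomputable def SLop (α : ℝ) (u : ℝ → ℝ) : ℝ → ℝ :=
  fun x => -(Real.exp (α ^ 2 * x ^ 2 / 2) *
    deriv (fun y => Real.exp (-(α ^ 2 * y ^ 2)) *
      deriv (fun z => Real.exp (α ^ 2 * z ^ 2 / 2) * u z) y) x)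



open Polynomial

noncomputable def PH : ℕ → Polynomial ℝ
  | 0 => 1
  | n+1 => C 2 * X * PH n - derivative (PH n)

lemma iteratedDeriv_gauss (n : ℕ) (x : ℝ) :
    iteratedDeriv n (fun y => Real.exp (-(y ^ 2))) x
      = (-1 : ℝ) ^ n * (PH n).eval x * Real.exp (-(x ^ 2)) := by
  induction n generalizing x with
  | zero => simp [PH]
  | succ n ih =>
    have hih : iteratedDeriv n (fun y => Real.exp (-(y ^ 2)))
        = fun x => (-1 : ℝ) ^ n * (PH n).eval x * Real.exp (-(x ^ 2)) := funext ih
    rw [iteratedDeriv_succ, hih]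
    have h1 : HasDerivAt (fun x : ℝ => (-1 : ℝ) ^ n * (PH n).eval x * Real.exp (-(x ^ 2)))
        ((-1:ℝ)^n * ((derivative (PH n)).eval x * Real.exp (-(x^2)) +
          (PH n).eval x * (Real.exp (-(x^2)) * (-(2*x))))) x := by
      have hp : HasDerivAt (fun x : ℝ => (PH n).eval x) ((derivative (PH n)).eval x) x :=
        (PH n).hasDerivAt x
      have he : HasDerivAt (fun x : ℝ => Real.exp (-(x ^ 2))) (Real.exp (-(x^2)) * (-(2*x))) x := by
        have : HasDerivAt (fun x : ℝ => -(x ^ 2)) (-(2*x)) x := by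
          simpa using ((hasDerivAt_pow 2 x).fun_neg)
        simpa using this.exp
      simpa [mul_assoc] using ((hp.mul he).const_mul ((-1:ℝ)^n))
    rw [h1.deriv, PH]
    simp [pow_succ]
    ring

lemma PH_deriv : ∀ n : ℕ, derivative (PH n) = C (2 * (n:ℝ)) * PH (n - 1) := by
  intro n
  induction n using Nat.strong_induction_on with
  | _ n ih =>
    match n with
    | 0 => simp [PH]
    | 1 => simp [PH]
    | (n+2) =>
      have h1 := ih (n+1) (by omega)
      have h0 := ih n (by omega)
      simp only [Nat.add_sub_cancel] at h1
      show derivative (PH (n+2)) = C (2 * ((n+2 : ℕ):ℝ)) * PH (n+1)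
      rw [show PH (n+2) = C 2 * X * PH (n+1) - derivative (PH (n+1)) from rfl,
        derivative_sub, derivative_mul, derivative_mul, derivative_C, derivative_X, h1,
        derivative_mul, derivative_C, h0,
        show PH (n+1) = C 2 * X * PH n - derivative (PH n) from rfl, h0]
      push_cast
      simp only [C_add, C_mul, C_1, map_ofNat]
      ring

lemma physHermite_eq (n : ℕ) (x : ℝ) : physHermite n x = (PH n).eval x := by
  rw [physHermite, iteratedDeriv_gauss]
  rw [show ((-1:ℝ)^n * Real.exp (x^2) * ((-1:ℝ)^n * (PH n).eval x * Real.exp (-(x^2))))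
    = ((-1:ℝ)^n)^2 * (Real.exp (x^2) * Real.exp (-(x^2))) * (PH n).eval x by ring,
    ← Real.exp_add]
  rw [← pow_mul, mul_comm n 2, pow_mul]
  simp

lemma genHermite_eq (α : ℝ) (n : ℕ) (x : ℝ) :
    genHermite α n x = Real.sqrt (α / (2 ^ n * n.factorial * Real.sqrt Real.pi)) *
      (PH n).eval (α * x) * Real.exp (-(α ^ 2 * x ^ 2) / 2) := by
  rw [genHermite, physHermite_eq]

lemma genHermite_hasDerivAt (α : ℝ) (n : ℕ) (x : ℝ) :
    HasDerivAt (genHermite α n)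
      (Real.sqrt (α / (2 ^ n * n.factorial * Real.sqrt Real.pi)) *
        (α * (derivative (PH n)).eval (α * x) - α ^ 2 * x * (PH n).eval (α * x)) *
        Real.exp (-(α ^ 2 * x ^ 2) / 2)) x := by
  have hg : genHermite α n = fun x => Real.sqrt (α / (2 ^ n * n.factorial * Real.sqrt Real.pi)) *
      ((PH n).eval (α * x) * Real.exp (-(α ^ 2 * x ^ 2) / 2)) := by
    funext y; rw [genHermite_eq]; ring
  rw [hg]
  have hp : HasDerivAt (fun x : ℝ => (PH n).eval (α * x)) (α * (derivative (PH n)).eval (α * x)) x := by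
    have := ((PH n).hasDerivAt (α * x)).comp x ((hasDerivAt_id x).const_mul α)
    simpa [mul_comm, Function.comp_def] using this
  have he : HasDerivAt (fun x : ℝ => Real.exp (-(α ^ 2 * x ^ 2) / 2))
      (Real.exp (-(α ^ 2 * x ^ 2) / 2) * (-(α ^ 2 * x))) x := by
    have h2 : HasDerivAt (fun x : ℝ => -(α ^ 2 * x ^ 2) / 2) (-(α ^ 2 * x)) x := by
      have : HasDerivAt (fun x : ℝ => x ^ 2) (2 * x) x := by simpa using hasDerivAt_pow 2 x
      have := ((this.const_mul (α ^ 2)).neg).div_const 2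
      exact this.congr_deriv (by ring)
    simpa using h2.exp
  have := (hp.mul he).const_mul (Real.sqrt (α / (2 ^ n * n.factorial * Real.sqrt Real.pi)))
  exact this.congr_deriv (by ring)

lemma Dx_genHermite (α : ℝ) (n : ℕ) (x : ℝ) :
    Dx α (genHermite α n) x = Real.sqrt (α / (2 ^ n * n.factorial * Real.sqrt Real.pi)) *
      (α * (derivative (PH n)).eval (α * x)) * Real.exp (-(α ^ 2 * x ^ 2) / 2) := by
  rw [Dx, (genHermite_hasDerivAt α n x).deriv, genHermite_eq]
  ring

lemma sqrt_const_ladder {α : ℝ} (hα : 0 < α) (n : ℕ) :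
    Real.sqrt (α / (2 ^ (n+1) * (n+1).factorial * Real.sqrt Real.pi)) * (2 * ((n:ℝ) + 1))
      = Real.sqrt (2 * ((n:ℝ) + 1)) * Real.sqrt (α / (2 ^ n * n.factorial * Real.sqrt Real.pi)) := by
  have hπ : 0 < Real.sqrt Real.pi := Real.sqrt_pos.mpr Real.pi_pos
  have hf : (0:ℝ) < (n.factorial : ℝ) := by exact_mod_cast n.factorial_pos
  have h2 : (0:ℝ) < (2:ℝ) ^ n := by positivity
  rw [show (2 * ((n:ℝ) + 1)) = Real.sqrt ((2 * ((n:ℝ) + 1))^2) from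
    (Real.sqrt_sq (by positivity)).symm]
  rw [← Real.sqrt_mul (by positivity), ← Real.sqrt_mul (by positivity)]
  congr 1
  rw [Nat.factorial_succ]
  push_cast
  rw [Real.sqrt_sq (by positivity)]
  field_simp
  ring

lemma Dx_genHermite_succ {α : ℝ} (hα : 0 < α) (n : ℕ) (x : ℝ) :
    Dx α (genHermite α (n+1)) x = α * Real.sqrt (2 * ((n:ℝ) + 1)) * genHermite α n x := by
  rw [Dx_genHermite, PH_deriv, genHermite_eq]
  simp only [Nat.add_sub_cancel, eval_mul, eval_C]
  push_cast
  rw [show Real.sqrt (α / (2 ^ (n+1) * ((n+1).factorial : ℝ) * Real.sqrt Real.pi)) *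
      (α * (2 * ((n:ℝ) + 1) * (PH n).eval (α * x))) * Real.exp (-(α ^ 2 * x ^ 2) / 2)
    = (Real.sqrt (α / (2 ^ (n+1) * (n+1).factorial * Real.sqrt Real.pi)) * (2 * ((n:ℝ) + 1))) *
      α * (PH n).eval (α * x) * Real.exp (-(α ^ 2 * x ^ 2) / 2) by push_cast; ring,
    sqrt_const_ladder hα]
  ring

lemma Dx_genHermite_zero (α : ℝ) (x : ℝ) :
    Dx α (genHermite α 0) x = 0 := by
  rw [Dx_genHermite, show PH 0 = 1 from rfl]
  simp

lemma integrable_poly_gauss (p : Polynomial ℝ) :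
    Integrable (fun x : ℝ => p.eval x * Real.exp (-(x ^ 2))) := by
  induction p using Polynomial.induction_on' with
  | add p q hp hq =>
    have := hp.add hq
    refine this.congr (Filter.Eventually.of_forall fun x => ?_)
    simp; ring
  | monomial n a =>
    have h : Integrable (fun x : ℝ => x ^ (n:ℝ) * Real.exp (-1 * x ^ 2)) :=
      integrable_rpow_mul_exp_neg_mul_sq one_pos (lt_of_lt_of_le (by norm_num) (Nat.cast_nonneg n))
    have := h.const_mul a
    refine this.congr (Filter.Eventually.of_forall fun x => ?_)
    simp only [Real.rpow_natCast, Polynomial.eval_monomial]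
    ring

lemma int_xmul (p : Polynomial ℝ) :
    ∫ x : ℝ, 2 * x * p.eval x * Real.exp (-(x ^ 2))
      = ∫ x : ℝ, (derivative p).eval x * Real.exp (-(x ^ 2)) := by
  have hu : ∀ x : ℝ, HasDerivAt (fun y : ℝ => p.eval y) ((derivative p).eval x) x :=
    fun x => p.hasDerivAt x
  have hv : ∀ x : ℝ, HasDerivAt (fun y : ℝ => Real.exp (-(y ^ 2)))
      (Real.exp (-(x ^ 2)) * (-(2 * x))) x := by
    intro x
    have h2 : HasDerivAt (fun y : ℝ => -(y ^ 2)) (-(2 * x)) x := by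
      simpa using (hasDerivAt_pow 2 x).fun_neg
    simpa [mul_comm] using h2.exp
  have huv' : Integrable ((fun y : ℝ => p.eval y) * fun x => Real.exp (-(x ^ 2)) * (-(2 * x))) := by
    have := integrable_poly_gauss (C (-2) * X * p)
    refine this.congr (Filter.Eventually.of_forall fun x => ?_)
    simp [Pi.mul_apply]
    ring
  have hu'v : Integrable ((fun x => (derivative p).eval x) * fun y : ℝ => Real.exp (-(y ^ 2))) := by
    have := integrable_poly_gauss (derivative p)
    refine this.congr (Filter.Eventually.of_forall fun x => ?_)
    simp [Pi.mul_apply]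
  have huv : Integrable ((fun y : ℝ => p.eval y) * fun y : ℝ => Real.exp (-(y ^ 2))) := by
    have := integrable_poly_gauss p
    refine this.congr (Filter.Eventually.of_forall fun x => ?_)
    simp [Pi.mul_apply]
  have key := integral_mul_deriv_eq_deriv_mul_of_integrable (fun x _ => hu x) (fun x _ => hv x) huv' hu'v huv
  have e1 : ∫ x : ℝ, p.eval x * (Real.exp (-(x ^ 2)) * (-(2 * x)))
      = - ∫ x : ℝ, 2 * x * p.eval x * Real.exp (-(x ^ 2)) := by
    rw [← integral_neg]
    congr 1; funext x; ring
  rw [e1] at key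
  have := neg_injective key
  linarith [this]

noncomputable def J (q : Polynomial ℝ) : ℝ := ∫ x : ℝ, q.eval x * Real.exp (-(x ^ 2))

lemma J_add (q r : Polynomial ℝ) : J (q + r) = J q + J r := by
  rw [J, J, J, ← integral_add (integrable_poly_gauss q) (integrable_poly_gauss r)]
  congr 1; funext x; simp; ring

lemma J_sub (q r : Polynomial ℝ) : J (q - r) = J q - J r := by
  rw [J, J, J, ← integral_sub (integrable_poly_gauss q) (integrable_poly_gauss r)]
  congr 1; funext x; simp; ring

lemma J_const_mul (a : ℝ) (q : Polynomial ℝ) : J (C a * q) = a * J q := by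
  rw [J, J, ← integral_const_mul]
  congr 1; funext x; simp; ring

lemma Jx (q : Polynomial ℝ) : J (C 2 * X * q) = J (derivative q) := by
  rw [J, J, ← int_xmul]
  congr 1; funext x; simp

lemma J_one : J 1 = Real.sqrt Real.pi := by
  rw [J]
  simp only [Polynomial.eval_one, one_mul]
  rw [show (fun x : ℝ => Real.exp (-(x ^ 2))) = fun x : ℝ => Real.exp (-1 * x ^ 2) by
    funext x; ring_nf]
  rw [integral_gaussian 1]; simp

lemma J_PH_succ_free (j : ℕ) : J (PH (j+1)) = 0 := by
  rw [show PH (j+1) = C 2 * X * PH j - derivative (PH j) from rfl, J_sub, Jx, sub_self]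

lemma J_ortho : ∀ k j : ℕ, J (PH j * PH k)
    = if j = k then 2 ^ k * (k.factorial : ℝ) * Real.sqrt Real.pi else 0 := by
  intro k
  induction k with
  | zero =>
    intro j
    match j with
    | 0 => simp [show PH 0 = 1 from rfl, J_one]
    | (j+1) => simpa [show PH 0 = 1 from rfl] using J_PH_succ_free j
  | succ k ih =>
    intro j
    have key : J (PH j * PH (k+1)) = 2 * (j:ℝ) * J (PH (j-1) * PH k) := by
      have e : PH j * PH (k+1)
          = (C 2 * X * (PH j * PH k) - derivative (PH j * PH k))
            + derivative (PH j) * PH k := by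
        rw [show PH (k+1) = C 2 * X * PH k - derivative (PH k) from rfl, derivative_mul]; ring
      rw [e, J_add, J_sub, Jx, sub_self, zero_add, PH_deriv, mul_assoc, J_const_mul]
    rw [key]
    match j with
    | 0 => simp
    | (j+1) =>
      rw [show j + 1 - 1 = j from rfl, ih j]
      by_cases h : j = k
      · subst h
        simp only [if_pos rfl, Nat.factorial_succ]
        push_cast
        ring
      · simp [h, Nat.succ_ne_succ]

lemma genHermite_mul_eq {α : ℝ} (j k : ℕ) (x : ℝ) :
    genHermite α j x * genHermite α k x
      = (Real.sqrt (α / (2 ^ j * j.factorial * Real.sqrt Real.pi)) *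
         Real.sqrt (α / (2 ^ k * k.factorial * Real.sqrt Real.pi))) *
        ((PH j * PH k).eval (α * x) * Real.exp (-((α * x) ^ 2))) := by
  rw [genHermite_eq, genHermite_eq]
  rw [show Real.exp (-((α*x) ^ 2)) = Real.exp (-(α^2*x^2)/2) * Real.exp (-(α^2*x^2)/2) by
    rw [← Real.exp_add]; ring_nf]
  simp only [eval_mul]
  ring

lemma integrable_genHermite_mul {α : ℝ} (hα : 0 < α) (j k : ℕ) :
    Integrable (fun x : ℝ => genHermite α j x * genHermite α k x) := by
  have h1 : Integrable (fun x : ℝ => (PH j * PH k).eval (α * x) * Real.exp (-((α * x) ^ 2))) := by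
    exact (integrable_poly_gauss (PH j * PH k)).comp_mul_left' hα.ne'
  have := h1.const_mul (Real.sqrt (α / (2 ^ j * j.factorial * Real.sqrt Real.pi)) *
         Real.sqrt (α / (2 ^ k * k.factorial * Real.sqrt Real.pi)))
  refine this.congr (Filter.Eventually.of_forall fun x => ?_)
  exact (genHermite_mul_eq j k x).symm

lemma integral_genHermite_mul {α : ℝ} (hα : 0 < α) (j k : ℕ) :
    (∫ x : ℝ, genHermite α j x * genHermite α k x) = if j = k then 1 else 0 := by
  have hπ : 0 < Real.sqrt Real.pi := Real.sqrt_pos.mpr Real.pi_pos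
  have hf : (0:ℝ) < (k.factorial : ℝ) := by exact_mod_cast k.factorial_pos
  have h2 : (0:ℝ) < (2:ℝ) ^ k := by positivity
  have e1 : (∫ x : ℝ, genHermite α j x * genHermite α k x)
      = (Real.sqrt (α / (2 ^ j * j.factorial * Real.sqrt Real.pi)) *
         Real.sqrt (α / (2 ^ k * k.factorial * Real.sqrt Real.pi))) *
        ∫ x : ℝ, (PH j * PH k).eval (α * x) * Real.exp (-((α * x) ^ 2)) := by
    rw [← integral_const_mul]
    congr 1; funext x; rw [genHermite_mul_eq]
  rw [e1, show (fun x : ℝ => (PH j * PH k).eval (α * x) * Real.exp (-((α * x) ^ 2)))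
      = fun x : ℝ => (fun y => (PH j * PH k).eval y * Real.exp (-(y ^ 2))) (α * x) from rfl,
    MeasureTheory.Measure.integral_comp_mul_left (fun y => (PH j * PH k).eval y * Real.exp (-(y ^ 2))) α]
  have hJ := J_ortho k j
  rw [J] at hJ
  rw [hJ]
  by_cases h : j = k
  · subst h
    simp only [if_pos rfl, smul_eq_mul]
    rw [abs_of_pos (by positivity : (0:ℝ) < α⁻¹),
      Real.mul_self_sqrt (by positivity)]
    field_simp
    simp
  · simp [h]

lemma parseval {α : ℝ} (hα : 0 < α) (M : ℕ) (a : ℕ → ℝ) :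
    ∫ x : ℝ, (∑ k ∈ Finset.range M, a k * genHermite α k x) ^ 2
      = ∑ k ∈ Finset.range M, (a k) ^ 2 := by
  have expand : (fun x : ℝ => (∑ k ∈ Finset.range M, a k * genHermite α k x) ^ 2)
      = fun x => ∑ k ∈ Finset.range M, ∑ j ∈ Finset.range M,
          (a k * a j) * (genHermite α k x * genHermite α j x) := by
    funext x
    rw [sq, Finset.sum_mul_sum]
    exact Finset.sum_congr rfl fun k _ => Finset.sum_congr rfl fun j _ => by ring
  rw [expand]
  rw [integral_finset_sum _ (fun k _ => integrable_finset_sum _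
    (fun j _ => (integrable_genHermite_mul hα k j).const_mul _))]
  refine Finset.sum_congr rfl fun k hk => ?_
  rw [integral_finset_sum _ (fun j _ => (integrable_genHermite_mul hα k j).const_mul _)]
  have : ∀ j ∈ Finset.range M, (∫ x : ℝ, (a k * a j) * (genHermite α k x * genHermite α j x))
      = (a k * a j) * if k = j then 1 else 0 := by
    intro j _
    rw [integral_const_mul, integral_genHermite_mul hα]
  rw [Finset.sum_congr rfl this]
  simp only [mul_ite, mul_one, mul_zero]
  rw [Finset.sum_ite_eq (Finset.range M) k (fun j => a k * a j)]
  simp [Finset.mem_range.mp hk, sq]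

lemma Dx_sum (α : ℝ) (s : Finset ℕ) (a : ℕ → ℝ) (x : ℝ) :
    Dx α (fun y => ∑ k ∈ s, a k * genHermite α k y) x
      = ∑ k ∈ s, a k * Dx α (genHermite α k) x := by
  have hdiff : ∀ k ∈ s, DifferentiableAt ℝ (fun y => a k * genHermite α k y) x :=
    fun k _ => ((genHermite_hasDerivAt α k x).const_mul (a k)).differentiableAt
  rw [Dx, deriv_fun_sum hdiff, Finset.mul_sum, ← Finset.sum_add_distrib]
  refine Finset.sum_congr rfl fun k _ => ?_
  rw [deriv_const_mul _ (genHermite_hasDerivAt α k x).differentiableAt, Dx]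
  ring

lemma Dx_expand {α : ℝ} (hα : 0 < α) (N : ℕ) (a : ℕ → ℝ) (x : ℝ) :
    Dx α (fun y => ∑ k ∈ Finset.range (N+1), a k * genHermite α k y) x
      = ∑ j ∈ Finset.range N, (a (j+1) * (α * Real.sqrt (2 * ((j:ℝ) + 1)))) * genHermite α j x := by
  rw [Dx_sum, Finset.sum_range_succ', Dx_genHermite_zero α x, mul_zero, add_zero]
  refine Finset.sum_congr rfl fun j _ => ?_
  rw [Dx_genHermite_succ hα j x]
  ring

/-- with the viscosity operator `Q_m` acting on
`φ = Σ_{k=0}^N c_k H_k^α ∈ R_N` by `Q_m φ = Σ_{k=0}^N q̂_k c_k H_k^α`, one has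
`‖D_x Q_m φ‖² ≤ C (‖D_x φ‖² + α² m² ‖φ‖²)` for an absolute constant `C > 0`. -/
theorem DxQ_le_Dx : ∃ C : ℝ, 0 < C ∧ ∀ (α : ℝ), 0 < α → ∀ (m N : ℕ), 0 < m → m < N →
    ∀ q : ℕ → ℝ, (∀ k ≤ N, k ≤ m → q k = 0) →
    (∀ k ≤ N, m < k → 1 - (m : ℝ) / (k : ℝ) ≤ q k ∧ q k < 1) →
    ∀ (c : ℕ → ℝ) (φ Qφ : ℝ → ℝ),
    (φ = fun x => ∑ k ∈ Finset.range (N + 1), c k * genHermite α k x) →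
    (Qφ = fun x => ∑ k ∈ Finset.range (N + 1), q k * c k * genHermite α k x) →
    ∫ x : ℝ, (Dx α Qφ x) ^ 2
      ≤ C * ((∫ x : ℝ, (Dx α φ x) ^ 2) + α ^ 2 * (m : ℝ) ^ 2 * ∫ x : ℝ, (φ x) ^ 2) := by
  refine ⟨1, one_pos, ?_⟩
  intro α hα m N hm hmN q hq0 hq1 c φ Qφ hφ hQφ
  subst hφ; subst hQφ
  have e1 : (fun x : ℝ => (Dx α (fun y => ∑ k ∈ Finset.range (N+1),
        q k * c k * genHermite α k y) x) ^ 2)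
      = fun x => (∑ j ∈ Finset.range N, ((fun k => q k * c k) (j+1) *
          (α * Real.sqrt (2 * ((j:ℝ) + 1)))) * genHermite α j x) ^ 2 := by
    funext x
    rw [Dx_expand hα N (fun k => q k * c k) x]
  have e2 : (fun x : ℝ => (Dx α (fun y => ∑ k ∈ Finset.range (N+1),
        c k * genHermite α k y) x) ^ 2)
      = fun x => (∑ j ∈ Finset.range N, (c (j+1) *
          (α * Real.sqrt (2 * ((j:ℝ) + 1)))) * genHermite α j x) ^ 2 := by
    funext x
    rw [Dx_expand hα N c x]
  rw [show (∫ x : ℝ, (Dx α (fun y => ∑ k ∈ Finset.range (N+1),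
        q k * c k * genHermite α k y) x) ^ 2)
      = ∫ x : ℝ, (∑ j ∈ Finset.range N, ((fun k => q k * c k) (j+1) *
          (α * Real.sqrt (2 * ((j:ℝ) + 1)))) * genHermite α j x) ^ 2 from congrArg _ e1]
  rw [show (∫ x : ℝ, (Dx α (fun y => ∑ k ∈ Finset.range (N+1),
        c k * genHermite α k y) x) ^ 2)
      = ∫ x : ℝ, (∑ j ∈ Finset.range N, (c (j+1) *
          (α * Real.sqrt (2 * ((j:ℝ) + 1)))) * genHermite α j x) ^ 2 from congrArg _ e2]
  rw [parseval hα N (fun j => (fun k => q k * c k) (j+1) * (α * Real.sqrt (2 * ((j:ℝ) + 1)))),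
    parseval hα N (fun j => c (j+1) * (α * Real.sqrt (2 * ((j:ℝ) + 1)))),
    parseval hα (N+1) c, one_mul]
  have hterm : ∀ j ∈ Finset.range N,
      ((fun k => q k * c k) (j+1) * (α * Real.sqrt (2 * ((j:ℝ) + 1)))) ^ 2
        ≤ (c (j+1) * (α * Real.sqrt (2 * ((j:ℝ) + 1)))) ^ 2 := by
    intro j hj
    have hjN : j + 1 ≤ N := Finset.mem_range.mp hj
    have hq_sq : (q (j+1)) ^ 2 ≤ 1 := by
      by_cases h : j + 1 ≤ m
      · rw [hq0 (j+1) hjN h]; norm_num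
      · have hlt : m < j + 1 := by omega
        obtain ⟨hlow, hhigh⟩ := hq1 (j+1) hjN hlt
        have hge : (0:ℝ) ≤ q (j+1) := by
          refine le_trans ?_ hlow
          have : (m:ℝ) / ((j:ℕ)+1 : ℝ) ≤ 1 := by
            rw [div_le_one (by positivity)]
            exact_mod_cast hlt.le
          push_cast at this ⊢
          linarith
        calc (q (j+1)) ^ 2 ≤ 1 ^ 2 := by
              apply pow_le_pow_left₀ hge (le_of_lt hhigh)
          _ = 1 := one_pow 2
    calc ((fun k => q k * c k) (j+1) * (α * Real.sqrt (2 * ((j:ℝ) + 1)))) ^ 2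
        = (q (j+1)) ^ 2 * (c (j+1) * (α * Real.sqrt (2 * ((j:ℝ) + 1)))) ^ 2 := by ring
      _ ≤ 1 * (c (j+1) * (α * Real.sqrt (2 * ((j:ℝ) + 1)))) ^ 2 := by
          apply mul_le_mul_of_nonneg_right hq_sq (sq_nonneg _)
      _ = (c (j+1) * (α * Real.sqrt (2 * ((j:ℝ) + 1)))) ^ 2 := one_mul _
  refine le_trans (Finset.sum_le_sum hterm) ?_
  have hnn : 0 ≤ α ^ 2 * (m : ℝ) ^ 2 * ∑ k ∈ Finset.range (N+1), (c k) ^ 2 := by positivity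
  linarith
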